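/- arXiv:2411.12912 — 2 statements merged into one kernel-verified Lean document; each statement's English description precedes it below -/
import Mathlib

section
/- Let (A, A⁺, A⁻) be a Reedy algebra with idempotent set E. Then the subalgebra S := k e₀ × k e₁ × ⋯ × k eₙ (the k-span of the idempotents in E) is a maximal semisimple subalgebra of A⁺. -/
open scoped TensorProduct DirectSum

/-- The corner subspace `f·S·e` of an algebra `A`, for `S ⊆ A`. -/
def cornerSpace (k : Type*) [Field k] {A : Type*} [Ring A] [Algebra k A]
    (f e : A) (S : Set A) : Submodule k A :=
  Submodule.span k {x | ∃ a ∈ S, x = f * a * e}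

/-- Multiplication, as a linear map on the tensor product of two subspaces of an algebra. -/
noncomputable def mulTensor (k : Type*) [Field k] {A : Type*} [Ring A] [Algebra k A]
    (M N : Submodule k A) : (M ⊗[k] N) →ₗ[k] A :=
  TensorProduct.lift ((LinearMap.mul k A).domRestrict₁₂ M N)

/-- The multiplication map `⊕_l (e_j·P·e_l) ⊗ (e_l·M·e_i) → A`. -/
noncomputable def reedyMulMap (k : Type*) [Field k] {A : Type*} [Ring A] [Algebra k A]
    {ι : Type*} [Fintype ι] [DecidableEq ι]
    (e : ι → A) (P M : Set A) (j i : ι) :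
    (⨁ l : ι, (↥(cornerSpace k (e j) (e l) P) ⊗[k] ↥(cornerSpace k (e l) (e i) M))) →ₗ[k] A :=
  DirectSum.toModule k ι A fun l =>
    mulTensor k (cornerSpace k (e j) (e l) P) (cornerSpace k (e l) (e i) M)

/-- A Reedy algebra structure on `A`: a complete set of pairwise orthogonal idempotents
`e`, a degree function `deg`, and unital subalgebras `Ap = A⁺`, `Am = A⁻` containing the
idempotents, such that the corners of `A⁺` are upward directed and one-dimensional on the
diagonal, the corners of `A⁻` are downward directed and one-dimensional on the diagonal, and
multiplication induces isomorphisms `⊕_l e_j A⁺ e_l ⊗ e_l A⁻ e_i ≅ e_j A e_i`. -/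
structure IsReedy (k : Type*) [Field k] {A : Type*} [Ring A] [Algebra k A]
    {ι : Type*} [Fintype ι] [DecidableEq ι]
    (e : ι → A) (deg : ι → ℕ) (Ap Am : Subalgebra k A) : Prop where
  idem : ∀ i, IsIdempotentElem (e i)
  orth : ∀ i j, i ≠ j → e i * e j = 0
  complete : ∑ i, e i = 1
  memP : ∀ i, e i ∈ Ap
  memM : ∀ i, e i ∈ Am
  diagP : ∀ i, Module.finrank k (cornerSpace k (e i) (e i) (Ap : Set A)) = 1
  offP : ∀ i j, i ≠ j → cornerSpace k (e j) (e i) (Ap : Set A) ≠ ⊥ → deg i < deg j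
  diagM : ∀ i, Module.finrank k (cornerSpace k (e i) (e i) (Am : Set A)) = 1
  offM : ∀ i j, i ≠ j → cornerSpace k (e j) (e i) (Am : Set A) ≠ ⊥ → deg j < deg i
  mul_inj : ∀ i j, Function.Injective (reedyMulMap k e (Ap : Set A) (Am : Set A) j i)
  mul_range : ∀ i j, LinearMap.range (reedyMulMap k e (Ap : Set A) (Am : Set A) j i)
      = cornerSpace k (e j) (e i) Set.univ
/-- The corner `eAe` of an algebra, as a non-unital subalgebra: the set of elements
fixed under left and right multiplication by `e`. -/
def cornerNonUnitalSubalgebra (k : Type*) [Field k] {A : Type*} [Ring A] [Algebra k A]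
    (e : A) : NonUnitalSubalgebra k A where
  carrier := {x | e * x = x ∧ x * e = x}
  add_mem' := fun ha hb => ⟨by rw [mul_add, ha.1, hb.1], by rw [add_mul, ha.2, hb.2]⟩
  zero_mem' := ⟨mul_zero e, zero_mul e⟩
  mul_mem' := fun ha hb => ⟨by rw [← mul_assoc, ha.1], by rw [mul_assoc, hb.2]⟩
  smul_mem' := fun c x hx => ⟨by rw [mul_smul_comm, hx.1], by rw [smul_mul_assoc, hx.2]⟩

/-- The corner ring `eAe` attached to an idempotent `e` of an algebra `A`. -/
def CornerRing (k : Type*) [Field k] {A : Type*} [Ring A] [Algebra k A]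
    (e : {x : A // IsIdempotentElem x}) : Type _ :=
  ↥(cornerNonUnitalSubalgebra k (e : A))

instance CornerRing.instRing (k : Type*) [Field k] {A : Type*} [Ring A] [Algebra k A]
    (e : {x : A // IsIdempotentElem x}) : Ring (CornerRing k e) :=
  { (inferInstance : NonUnitalRing (cornerNonUnitalSubalgebra k (e : A))) with
    one := ⟨(e : A), e.2, e.2⟩
    one_mul := fun x => Subtype.ext x.2.1
    mul_one := fun x => Subtype.ext x.2.2 }

instance CornerRing.instModule (k : Type*) [Field k] {A : Type*} [Ring A] [Algebra k A]
    (e : {x : A // IsIdempotentElem x}) : Module k (CornerRing k e) :=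
  inferInstanceAs (Module k ↥(cornerNonUnitalSubalgebra k (e : A)))

noncomputable instance CornerRing.instAlgebra (k : Type*) [Field k] {A : Type*} [Ring A]
    [Algebra k A] (e : {x : A // IsIdempotentElem x}) : Algebra k (CornerRing k e) :=
  Algebra.ofModule
    (fun c x y => Subtype.ext (smul_mul_assoc c x.1 y.1))
    (fun c x y => Subtype.ext (mul_smul_comm c x.1 y.1))

/-- The element of the corner ring `eAe` underlying `x : A`, given proofs. -/
def CornerRing.mk (k : Type*) [Field k] {A : Type*} [Ring A] [Algebra k A]
    (e : {x : A // IsIdempotentElem x}) (x : A) (h1 : (e : A) * x = x) (h2 : x * (e : A) = x) :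
    CornerRing k e := ⟨x, h1, h2⟩


section ReedyAux

variable {k : Type*} [Field k] {A : Type*} [Ring A] [Algebra k A]
variable {ι : Type*} [Fintype ι] [DecidableEq ι]
variable {e : ι → A} {deg : ι → ℕ} {Ap Am : Subalgebra k A}

lemma reedyCornerMem {a : A} (ha : a ∈ Ap) (j i : ι) :
    e j * a * e i ∈ cornerSpace k (e j) (e i) (Ap : Set A) :=
  Submodule.subset_span ⟨a, ha, rfl⟩

lemma reedyOffZero (h : IsReedy k e deg Ap Am) {a : A} (ha : a ∈ Ap) {j i : ι}
    (hij : j ≠ i) (hd : ¬ deg i < deg j) : e j * a * e i = 0 := by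
  by_contra hx
  exact hd (h.offP i j (Ne.symm hij) fun hb => hx (by
    have hm := reedyCornerMem (e := e) ha j i
    rw [hb, Submodule.mem_bot] at hm
    exact hm))

lemma reedyENeZero [FiniteDimensional k A] (h : IsReedy k e deg Ap Am) (i : ι) : e i ≠ 0 := by
  intro h0
  have hb : cornerSpace k (e i) (e i) (Ap : Set A) = ⊥ := by
    rw [eq_bot_iff, cornerSpace, Submodule.span_le]
    rintro x ⟨a, _, rfl⟩
    simp [h0]
  have hd := h.diagP i
  rw [hb] at hd
  simp at hd

lemma reedyDiag [FiniteDimensional k A] (h : IsReedy k e deg Ap Am) {a : A} (ha : a ∈ Ap)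
    (i : ι) : ∃ c : k, e i * a * e i = c • e i := by
  have hmem : e i ∈ cornerSpace k (e i) (e i) (Ap : Set A) := by
    have hm := reedyCornerMem (e := e) (h.memP i) i i
    rwa [(h.idem i).eq, (h.idem i).eq] at hm
  have hle : (Submodule.span k {e i} : Submodule k A)
      ≤ cornerSpace k (e i) (e i) (Ap : Set A) := by
    rw [Submodule.span_le, Set.singleton_subset_iff]; exact hmem
  have heq : (Submodule.span k {e i} : Submodule k A)
      = cornerSpace k (e i) (e i) (Ap : Set A) :=
    Submodule.eq_of_le_of_finrank_eq hle (by
      rw [finrank_span_singleton (reedyENeZero h i), h.diagP i])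
  have hm := reedyCornerMem (e := e) ha i i
  rw [← heq, Submodule.mem_span_singleton] at hm
  obtain ⟨c, hc⟩ := hm
  exact ⟨c, hc.symm⟩

/-- Insert the complete set of idempotents in the middle of a product. -/
lemma reedyInsert (hone : ∑ l, e l = (1 : A)) (hid : ∀ l, e l * e l = e l) (u v : A) :
    u * v = ∑ l, (u * e l) * (e l * v) := by
  calc u * v = u * (∑ l, e l) * v := by rw [hone, mul_one]
    _ = ∑ l, u * e l * v := by rw [Finset.mul_sum, Finset.sum_mul]
    _ = ∑ l, (u * e l) * (e l * v) := Finset.sum_congr rfl fun l _ => by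
        conv_lhs => rw [← hid l]
        simp [mul_assoc]

lemma reedyDiagZero_mul_left (h : IsReedy k e deg Ap Am) {t x : A} (ht : t ∈ Ap) (hx : x ∈ Ap)
    (hd : ∀ i, e i * x * e i = 0) (i : ι) : e i * (t * x) * e i = 0 := by
  have key : e i * (t * x) * e i = ∑ l, (e i * t * e l) * (e l * x * e i) := by
    have h1 : e i * (t * x) * e i = (e i * t) * (x * e i) := by simp [mul_assoc]
    rw [h1, reedyInsert h.complete (fun l => (h.idem l).eq) (e i * t) (x * e i)]
    exact Finset.sum_congr rfl fun l _ => by simp [mul_assoc]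
  rw [key]
  apply Finset.sum_eq_zero
  intro l _
  rcases eq_or_ne l i with rfl | hli
  · rw [hd l, mul_zero]
  · by_cases hdeg : deg l < deg i
    · rw [reedyOffZero h hx hli (by omega), mul_zero]
    · rw [reedyOffZero h ht (Ne.symm hli) hdeg, zero_mul]

lemma reedyDiagZero_mul_right (h : IsReedy k e deg Ap Am) {t x : A} (ht : t ∈ Ap) (hx : x ∈ Ap)
    (hd : ∀ i, e i * x * e i = 0) (i : ι) : e i * (x * t) * e i = 0 := by
  have key : e i * (x * t) * e i = ∑ l, (e i * x * e l) * (e l * t * e i) := by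
    have h1 : e i * (x * t) * e i = (e i * x) * (t * e i) := by simp [mul_assoc]
    rw [h1, reedyInsert h.complete (fun l => (h.idem l).eq) (e i * x) (t * e i)]
    exact Finset.sum_congr rfl fun l _ => by simp [mul_assoc]
  rw [key]
  apply Finset.sum_eq_zero
  intro l _
  rcases eq_or_ne l i with rfl | hli
  · rw [hd l, zero_mul]
  · by_cases hdeg : deg l < deg i
    · rw [reedyOffZero h ht hli (by omega), mul_zero]
    · rw [reedyOffZero h hx (Ne.symm hli) hdeg, zero_mul]

/-- Corners of powers of a strictly degree-raising element vanish. -/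
lemma reedyPowOff (h : IsReedy k e deg Ap Am) {x : A}
    (hoff : ∀ j i : ι, e j * x * e i ≠ 0 → deg i < deg j) :
    ∀ (m : ℕ) (j i : ι), deg j < deg i + m → e j * x ^ m * e i = 0 := by
  intro m
  induction m with
  | zero =>
    intro j i hji
    have hij : j ≠ i := fun hrfl => by subst hrfl; omega
    rw [pow_zero, mul_one]
    exact h.orth j i hij
  | succ m ih =>
    intro j i hji
    have key : e j * x ^ (m + 1) * e i = ∑ l, (e j * x * e l) * (e l * x ^ m * e i) := by
      have h1 : e j * x ^ (m + 1) * e i = (e j * x) * (x ^ m * e i) := by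
        rw [pow_succ']; simp [mul_assoc]
      rw [h1, reedyInsert h.complete (fun l => (h.idem l).eq) (e j * x) (x ^ m * e i)]
      exact Finset.sum_congr rfl fun l _ => by simp [mul_assoc]
    rw [key]
    apply Finset.sum_eq_zero
    intro l _
    by_cases hl : e j * x * e l = 0
    · rw [hl, zero_mul]
    · have hlj := hoff j l hl
      rw [ih l i (by omega), mul_zero]

/-- A strictly degree-raising element is nilpotent. -/
lemma reedyPowZero (h : IsReedy k e deg Ap Am) {x : A}
    (hoff : ∀ j i : ι, e j * x * e i ≠ 0 → deg i < deg j) :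
    x ^ (Finset.univ.sup deg + 1) = 0 := by
  set m := Finset.univ.sup deg + 1 with hm
  have hx : x ^ m = ∑ j, ∑ i, (e j * x ^ m * e i) := by
    calc x ^ m = (∑ j, e j) * x ^ m * (∑ i, e i) := by rw [h.complete, one_mul, mul_one]
      _ = ∑ j, ∑ i, (e j * x ^ m * e i) := by
          simp only [Finset.sum_mul, Finset.mul_sum]
          rw [Finset.sum_comm]
  rw [hx]
  apply Finset.sum_eq_zero; intro j _
  apply Finset.sum_eq_zero; intro i _
  exact reedyPowOff h hoff m j i
    (by have : deg j ≤ Finset.univ.sup deg := Finset.le_sup (Finset.mem_univ j); omega)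

end ReedyAux

/-- For a Reedy algebra `(A, A⁺, A⁻)` with idempotent set `E`, the
subalgebra `S = k e₀ × ⋯ × k eₙ` generated by the idempotents is a maximal semisimple
subalgebra of `A⁺`: it is semisimple, contained in `A⁺`, and equal to every semisimple
subalgebra of `A⁺` containing it. -/
theorem reedy_span_idempotents_maximal_semisimple
    (k : Type*) [Field k] (A : Type*) [Ring A] [Algebra k A] [FiniteDimensional k A]
    {ι : Type*} [Fintype ι] [DecidableEq ι]
    (e : ι → A) (deg : ι → ℕ) (Ap Am : Subalgebra k A)
    (h : IsReedy k e deg Ap Am) :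
    Algebra.adjoin k (Set.range e) ≤ Ap ∧
    IsSemisimpleRing ↥(Algebra.adjoin k (Set.range e)) ∧
    ∀ T : Subalgebra k A, T ≤ Ap → Algebra.adjoin k (Set.range e) ≤ T →
      IsSemisimpleRing ↥T → T = Algebra.adjoin k (Set.range e) := by
  classical
  -- the algebra homomorphism `(ι → k) → A` sending `c` to `∑ i, c i • e i`
  have hone : ∑ i, e i = (1 : A) := h.complete
  let ψ : (ι → k) →ₐ[k] A :=
    { toFun := fun c => ∑ i, c i • e i
      map_one' := by
        show (∑ i, (1 : ι → k) i • e i) = 1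
        simp [hone]
      map_mul' := fun c d => by
        show (∑ i, (c * d) i • e i) = (∑ i, c i • e i) * (∑ i, d i • e i)
        rw [eq_comm, Finset.sum_mul_sum]
        rw [Finset.sum_congr rfl (fun i _ => Finset.sum_eq_single i
          (fun j _ hji => by rw [smul_mul_smul_comm, h.orth i j (Ne.symm hji), smul_zero]
            )
          (fun hi => absurd (Finset.mem_univ i) hi))]
        exact Finset.sum_congr rfl fun i _ => by
          rw [smul_mul_smul_comm, (h.idem i).eq, Pi.mul_apply]
      map_zero' := by
        show (∑ i, (0 : ι → k) i • e i) = 0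
        simp
      map_add' := fun c d => by
        show (∑ i, (c + d) i • e i) = (∑ i, c i • e i) + (∑ i, d i • e i)
        simp [add_smul, Finset.sum_add_distrib]
      commutes' := fun c => by
        show (∑ i, (algebraMap k (ι → k) c) i • e i) = algebraMap k A c
        have hc : ∀ i, (algebraMap k (ι → k) c) i = c := fun i => rfl
        simp only [hc]
        rw [← Finset.smul_sum, hone, Algebra.algebraMap_eq_smul_one] }
  have hψ : ∀ c : ι → k, ψ c = ∑ i, c i • e i := fun _ => rfl
  have hrange : ψ.range = Algebra.adjoin k (Set.range e) := by
    apply le_antisymm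
    · intro x hx
      obtain ⟨c, rfl⟩ := (AlgHom.mem_range ψ).mp hx
      rw [hψ]
      exact Subalgebra.sum_mem _ fun i _ => Subalgebra.smul_mem _
        (Algebra.subset_adjoin (Set.mem_range_self i)) _
    · apply Algebra.adjoin_le
      rintro x ⟨i, rfl⟩
      rw [SetLike.mem_coe, AlgHom.mem_range]
      refine ⟨Pi.single i 1, ?_⟩
      rw [hψ]
      rw [Finset.sum_eq_single i (fun j _ hji => by
        rw [Pi.single_eq_of_ne hji, zero_smul]) (fun hi => absurd (Finset.mem_univ i) hi)]
      rw [Pi.single_eq_same, one_smul]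
  have hinj : Function.Injective ψ := by
    intro c d hcd
    funext i
    have hsum : ∑ j, c j • e j = ∑ j, d j • e j := hcd
    have hi : e i * (∑ j, c j • e j) * e i = e i * (∑ j, d j • e j) * e i := by rw [hsum]
    have hkey : ∀ cc : ι → k, e i * (∑ j, cc j • e j) * e i = cc i • e i := by
      intro cc
      rw [Finset.mul_sum, Finset.sum_mul]
      rw [Finset.sum_eq_single i (fun j _ hji => by
          rw [mul_smul_comm, smul_mul_assoc, h.orth i j (Ne.symm hji), zero_mul, smul_zero])
        (fun hi' => absurd (Finset.mem_univ i) hi')]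
      rw [mul_smul_comm, smul_mul_assoc, (h.idem i).eq, (h.idem i).eq]
    rw [hkey c, hkey d] at hi
    exact smul_left_injective k (reedyENeZero h i) hi
  -- Part 1
  have part1 : Algebra.adjoin k (Set.range e) ≤ Ap :=
    Algebra.adjoin_le (by rintro x ⟨i, rfl⟩; exact h.memP i)
  -- Part 2
  have part2 : IsSemisimpleRing ↥(Algebra.adjoin k (Set.range e)) := by
    have equiv1 : (ι → k) ≃ₐ[k] ψ.range := AlgEquiv.ofInjective ψ hinj
    have equiv2 : ψ.range ≃ₐ[k] ↥(Algebra.adjoin k (Set.range e)) :=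
      Subalgebra.equivOfEq _ _ hrange
    exact (equiv1.trans equiv2).toRingEquiv.isSemisimpleRing
  refine ⟨part1, part2, ?_⟩
  -- Part 3
  intro T hTAp hST hTss
  apply le_antisymm _ hST
  intro t htT
  -- the ideal of elements of `T` with vanishing diagonal corners
  let N : Ideal ↥T :=
    { carrier := {x : ↥T | ∀ i, e i * (x : A) * e i = 0}
      add_mem' := fun {a b} ha hb i => by
        push_cast
        rw [mul_add, add_mul, ha i, hb i, add_zero]
      zero_mem' := fun i => by
        push_cast
        rw [mul_zero, zero_mul]
      smul_mem' := fun c x hx i => by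
        have hcx : ((c • x : ↥T) : A) = (c : A) * (x : A) := rfl
        rw [hcx]
        exact reedyDiagZero_mul_left h (hTAp c.2) (hTAp x.2) hx i }
  have hNmem : ∀ x : ↥T, x ∈ N ↔ ∀ i, e i * (x : A) * e i = 0 := fun x => Iff.rfl
  -- every element of `N` is zero
  have hNbot : ∀ x ∈ N, x = 0 := by
    obtain ⟨ε, hεidem, hεspan⟩ := IsSemisimpleRing.ideal_eq_span_idempotent N
    have hεN : ε ∈ N := hεspan ▸ Ideal.subset_span rfl
    have hεoff : ∀ j i : ι, e j * (ε : A) * e i ≠ 0 → deg i < deg j := by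
      intro j i hne
      rcases eq_or_ne j i with rfl | hij
      · exact absurd ((hNmem ε).mp hεN j) hne
      · by_contra hlt
        exact hne (reedyOffZero h (hTAp ε.2) hij hlt)
    have hεpow : (ε : A) ^ (Finset.univ.sup deg + 1) = 0 := reedyPowZero h hεoff
    have hεpow' : (ε : A) ^ (Finset.univ.sup deg + 1) = (ε : A) := by
      have : ε ^ (Finset.univ.sup deg + 1) = ε := hεidem.pow_succ_eq _
      calc (ε : A) ^ (Finset.univ.sup deg + 1)
          = ((ε ^ (Finset.univ.sup deg + 1) : ↥T) : A) := by norm_cast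
        _ = (ε : A) := by rw [this]
    have hε0 : ε = 0 := by
      ext
      rw [← hεpow', hεpow]
      simp
    intro x hx
    rw [hεspan, hε0, Ideal.span_singleton_eq_bot.mpr rfl, Submodule.mem_bot] at hx
    exact hx
  -- decompose `t`
  have htAp : t ∈ Ap := hTAp htT
  choose c hc using fun i => reedyDiag h htAp i
  have hsmem : ∀ i, c i • e i ∈ T := fun i =>
    Subalgebra.smul_mem _ (hST (Algebra.subset_adjoin (Set.mem_range_self i))) _
  set s : A := ∑ i, c i • e i with hs
  have hsT : s ∈ T := Subalgebra.sum_mem _ fun i _ => hsmem i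
  have hxT : t - s ∈ T := sub_mem htT hsT
  have hdiagzero : ∀ i, e i * (t - s) * e i = 0 := by
    intro i
    have hsdiag : e i * s * e i = c i • e i := by
      rw [hs, Finset.mul_sum, Finset.sum_mul]
      rw [Finset.sum_eq_single i (fun j _ hji => by
          rw [mul_smul_comm, smul_mul_assoc, h.orth i j (Ne.symm hji), zero_mul, smul_zero])
        (fun hi' => absurd (Finset.mem_univ i) hi')]
      rw [mul_smul_comm, smul_mul_assoc, (h.idem i).eq, (h.idem i).eq]
    rw [mul_sub, sub_mul, hsdiag, hc i, sub_self]
  have hxN : (⟨t - s, hxT⟩ : ↥T) ∈ N := fun i => hdiagzero i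
  have hx0 : t - s = 0 := by
    have := hNbot _ hxN
    exact congrArg Subtype.val this
  have hts : t = s := by rw [← sub_eq_zero]; exact hx0
  rw [hts, ← hrange]
  exact ⟨c, (hψ c).trans hs.symm⟩
end

section
/- Let (A, A⁺, A⁻) be a Reedy algebra, t the minimal degree occurring, and ε_t the sum of all idempotents in E of degree t. Then the multiplication map A⁺ε_t ⊗_{S_t} ε_t A⁻ → A ε_t A is an isomorphism of A⁺–A⁻-bimodules, where S_t = ∏_{deg(eᵢ)=t} k eᵢ. -/
open scoped TensorProduct DirectSum

section ReedyAux
set_option linter.unusedSectionVars false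

namespace ReedyAux
variable (k : Type*) [Field k] {A : Type*} [Ring A] [Algebra k A]

lemma mulTensor_tmul (M N : Submodule k A) (p : M) (q : N) :
    mulTensor k M N (p ⊗ₜ[k] q) = (p : A) * (q : A) := by
  rw [mulTensor, TensorProduct.lift.tmul, LinearMap.domRestrict₁₂_apply, LinearMap.mul_apply']

lemma mem_cornerSpace {f g : A} {S : Set A} {a : A} (ha : a ∈ S) :
    f * a * g ∈ cornerSpace k f g S :=
  Submodule.subset_span ⟨a, ha, rfl⟩

lemma cornerSpace_mul_right {f g : A} {S : Set A} (hg : g * g = g) :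
    ∀ x ∈ cornerSpace k f g S, x * g = x := by
  intro x hx
  refine Submodule.span_induction ?_ (by simp) (fun a b _ _ ha hb => by rw [add_mul, ha, hb])
    (fun c a _ ha => by rw [smul_mul_assoc, ha]) hx
  rintro x ⟨a, _, rfl⟩
  rw [mul_assoc, hg]

lemma cornerSpace_mul_left {f g : A} {S : Set A} (hf : f * f = f) :
    ∀ x ∈ cornerSpace k f g S, f * x = x := by
  intro x hx
  refine Submodule.span_induction ?_ (by simp) (fun a b _ _ ha hb => by rw [mul_add, ha, hb])
    (fun c a _ ha => by rw [mul_smul_comm, ha]) hx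
  rintro x ⟨a, _, rfl⟩
  rw [← mul_assoc, ← mul_assoc, hf]

lemma mulLeft_mem_cornerSpace {g : A} {S : Set A} (f : A) :
    ∀ x ∈ cornerSpace k 1 g S, LinearMap.mulLeft k f x ∈ cornerSpace k f g S := by
  intro x hx
  rw [LinearMap.mulLeft_apply]
  refine Submodule.span_induction ?_ (by simp)
    (fun a b _ _ ha hb => by rw [mul_add]; exact add_mem ha hb)
    (fun c a _ ha => by rw [mul_smul_comm]; exact Submodule.smul_mem _ _ ha) hx
  rintro x ⟨a, haS, rfl⟩
  have hh : f * (1 * a * g) = f * a * g := by rw [one_mul, mul_assoc]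
  rw [hh]; exact mem_cornerSpace k haS

lemma mulRight_mem_cornerSpace {f : A} {S : Set A} (g : A) :
    ∀ x ∈ cornerSpace k f 1 S, LinearMap.mulRight k g x ∈ cornerSpace k f g S := by
  intro x hx
  rw [LinearMap.mulRight_apply]
  refine Submodule.span_induction ?_ (by simp)
    (fun a b _ _ ha hb => by rw [add_mul]; exact add_mem ha hb)
    (fun c a _ ha => by rw [smul_mul_assoc]; exact Submodule.smul_mem _ _ ha) hx
  rintro x ⟨a, haS, rfl⟩
  have hh : f * a * 1 * g = f * a * g := by rw [mul_one]
  rw [hh]; exact mem_cornerSpace k haS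

/-- Projection `A⁺e_g → e_f A⁺ e_g`, `p ↦ f*p`. -/
noncomputable def piP (f g : A) (S : Set A) :
    cornerSpace k 1 g S →ₗ[k] cornerSpace k f g S :=
  LinearMap.restrict (LinearMap.mulLeft k f) (mulLeft_mem_cornerSpace k f)

/-- Projection `e_f A⁻ → e_f A⁻ e_g`, `q ↦ q*g`. -/
noncomputable def piM (f g : A) (S : Set A) :
    cornerSpace k f 1 S →ₗ[k] cornerSpace k f g S :=
  LinearMap.restrict (LinearMap.mulRight k g) (mulRight_mem_cornerSpace k g)

@[simp] lemma piP_coe (f g : A) (S : Set A) (p : cornerSpace k 1 g S) :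
    (piP k f g S p : A) = f * p := by
  rw [piP, LinearMap.restrict_coe_apply, LinearMap.mulLeft_apply]

@[simp] lemma piM_coe (f g : A) (S : Set A) (p : cornerSpace k f 1 S) :
    (piM k f g S p : A) = p * g := by
  rw [piM, LinearMap.restrict_coe_apply, LinearMap.mulRight_apply]

lemma exists_smul_of_finrank_one [FiniteDimensional k A] {W : Submodule k A}
    (h1 : Module.finrank k W = 1) {v : A} (hv : v ∈ W) (hv0 : v ≠ 0) {q : A} (hq : q ∈ W) :
    ∃ c : k, q = c • v := by
  have hle : Submodule.span k {v} ≤ W := by rw [Submodule.span_le]; simpa using hv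
  have heq : Submodule.span k {v} = W :=
    Submodule.eq_of_le_of_finrank_le hle (by rw [h1, finrank_span_singleton hv0])
  rw [← heq, Submodule.mem_span_singleton] at hq
  obtain ⟨c, hc⟩ := hq
  exact ⟨c, hc.symm⟩

lemma toModule_mem_of {ι' : Type*} [DecidableEq ι'] {Mi : ι' → Type*}
    [∀ i, AddCommMonoid (Mi i)] [∀ i, Module k (Mi i)] {N : Type*} [AddCommGroup N]
    [Module k N] (f : ∀ i, Mi i →ₗ[k] N) (C : Submodule k N) (hf : ∀ i x, f i x ∈ C)
    (y : ⨁ i, Mi i) : DirectSum.toModule k ι' N f y ∈ C := by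
  refine DirectSum.induction_on y (by simp) ?_ ?_
  · intro i x
    rw [← DirectSum.lof_eq_of k, DirectSum.toModule_lof]; exact hf i x
  · intro a b ha hb
    rw [map_add]; exact add_mem ha hb

lemma mulTensor_mem (M N : Submodule k A) (C : Submodule k A)
    (h : ∀ (p : M) (q : N), (p : A) * (q : A) ∈ C) (v : M ⊗[k] N) :
    mulTensor k M N v ∈ C := by
  refine TensorProduct.induction_on v (by simp) ?_ ?_
  · intro p q; rw [mulTensor_tmul]; exact h p q
  · intro a b ha hb; rw [map_add]; exact add_mem ha hb

variable {k}
variable {ι : Type*} [Fintype ι] [DecidableEq ι]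
    {e : ι → A} {deg : ι → ℕ} {Ap Am : Subalgebra k A}
    (h : IsReedy k e deg Ap Am)

include h

lemma reedy_e_ne_zero [FiniteDimensional k A] (i : ι) : e i ≠ 0 := by
  intro hi
  have hd := h.diagM i
  have hbot : cornerSpace k (e i) (e i) (Am : Set A) = ⊥ := by
    refine le_bot_iff.mp ?_
    rw [cornerSpace, Submodule.span_le]
    rintro x ⟨a, _, rfl⟩
    simp [hi]
  rw [hbot] at hd
  simp [finrank_bot] at hd

lemma reedy_diagM_smul [FiniteDimensional k A] (l : ι) {q : A}
    (hq : q ∈ cornerSpace k (e l) (e l) (Am : Set A)) :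
    ∃ c : k, q = c • e l := by
  have hmem : e l ∈ cornerSpace k (e l) (e l) (Am : Set A) := by
    have := mem_cornerSpace k (f := e l) (g := e l) (h.memM l)
    rwa [h.idem l, h.idem l] at this
  exact exists_smul_of_finrank_one k (h.diagM l) hmem (reedy_e_ne_zero h l) hq

lemma reedy_diagP_smul [FiniteDimensional k A] (l : ι) {q : A}
    (hq : q ∈ cornerSpace k (e l) (e l) (Ap : Set A)) :
    ∃ c : k, q = c • e l := by
  have hmem : e l ∈ cornerSpace k (e l) (e l) (Ap : Set A) := by
    have := mem_cornerSpace k (f := e l) (g := e l) (h.memP l)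
    rwa [h.idem l, h.idem l] at this
  exact exists_smul_of_finrank_one k (h.diagP l) hmem (reedy_e_ne_zero h l) hq

lemma reedy_cornerP_le (j m : ι) :
    cornerSpace k (e j) (e m) (Ap : Set A) ≤ cornerSpace k 1 (e m) (Ap : Set A) := by
  rw [cornerSpace, Submodule.span_le]
  rintro x ⟨a, ha, rfl⟩
  have hh : e j * a * e m = 1 * (e j * a) * e m := by rw [one_mul]
  rw [hh]
  exact mem_cornerSpace k (mul_mem (h.memP j) ha)

lemma reedy_cornerM_le (m i : ι) :
    cornerSpace k (e m) (e i) (Am : Set A) ≤ cornerSpace k (e m) 1 (Am : Set A) := by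
  rw [cornerSpace, Submodule.span_le]
  rintro x ⟨a, ha, rfl⟩
  have hh : e m * a * e i = e m * (a * e i) * 1 := by rw [mul_one, mul_assoc]
  rw [hh]
  exact mem_cornerSpace k (mul_mem ha (h.memM i))

lemma reedy_mem_P [FiniteDimensional k A] {t : ℕ} (ht_le : ∀ i, t ≤ deg i) {l : ι}
    (hl : deg l = t) (a : A) :
    a * e l ∈ cornerSpace k 1 (e l) (Ap : Set A) := by
  have ha : a * e l = ∑ j, e j * a * e l := by
    rw [show (∑ j, e j * a * e l) = (∑ j, e j) * (a * e l) by
      rw [Finset.sum_mul]; exact Finset.sum_congr rfl fun j _ => (mul_assoc _ _ _),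
      h.complete, one_mul]
  rw [ha]
  refine Submodule.sum_mem _ fun j _ => ?_
  have hmem : e j * a * e l ∈
      LinearMap.range (reedyMulMap k e (Ap : Set A) (Am : Set A) j l) := by
    rw [h.mul_range l j]; exact mem_cornerSpace k (Set.mem_univ a)
  obtain ⟨y, hy⟩ := hmem
  rw [← hy]
  refine toModule_mem_of k _ _ ?_ y
  intro m v
  refine mulTensor_mem k _ _ _ ?_ v
  intro p q
  by_cases hm : m = l
  · subst hm
    obtain ⟨c, hc⟩ := reedy_diagM_smul h m q.2
    rw [hc, mul_smul_comm]
    refine Submodule.smul_mem _ _ ?_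
    rw [cornerSpace_mul_right k (h.idem m) p.1 p.2]
    exact reedy_cornerP_le h j m p.2
  · have hbot : cornerSpace k (e m) (e l) (Am : Set A) = ⊥ := by
      by_contra hb
      have h1 := h.offM l m (Ne.symm hm) hb
      have h2 := ht_le m
      omega
    have hq0 : (q : A) = 0 := by
      have hqb : (q : A) ∈ (⊥ : Submodule k A) := hbot ▸ q.2
      simpa using hqb
    rw [hq0, mul_zero]; exact zero_mem _

lemma reedy_mem_M [FiniteDimensional k A] {t : ℕ} (ht_le : ∀ i, t ≤ deg i) {l : ι}
    (hl : deg l = t) (b : A) :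
    e l * b ∈ cornerSpace k (e l) 1 (Am : Set A) := by
  have hb : e l * b = ∑ i, e l * b * e i := by
    rw [← Finset.mul_sum, h.complete, mul_one]
  rw [hb]
  refine Submodule.sum_mem _ fun i _ => ?_
  have hmem : e l * b * e i ∈
      LinearMap.range (reedyMulMap k e (Ap : Set A) (Am : Set A) l i) := by
    rw [h.mul_range i l]; exact mem_cornerSpace k (Set.mem_univ b)
  obtain ⟨y, hy⟩ := hmem
  rw [← hy]
  refine toModule_mem_of k _ _ ?_ y
  intro m v
  refine mulTensor_mem k _ _ _ ?_ v
  intro p q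
  by_cases hm : m = l
  · subst hm
    obtain ⟨c, hc⟩ := reedy_diagP_smul h m p.2
    rw [hc, smul_mul_assoc]
    refine Submodule.smul_mem _ _ ?_
    rw [cornerSpace_mul_left k (h.idem m) q.1 q.2]
    exact reedy_cornerM_le h m i q.2
  · have hbot : cornerSpace k (e l) (e m) (Ap : Set A) = ⊥ := by
      by_contra hb'
      have h1 := h.offP m l hm hb'
      have h2 := ht_le m
      omega
    have hp0 : (p : A) = 0 := by
      have hpb : (p : A) ∈ (⊥ : Submodule k A) := hbot ▸ p.2
      simpa using hpb
    rw [hp0, zero_mul]; exact zero_mem _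

end ReedyAux
end ReedyAux

set_option maxHeartbeats 2000000 in
/-- Let `(A, A⁺, A⁻)` be Reedy, `t` the minimal occurring degree and
`ε_t` the sum of the degree-`t` idempotents. Multiplication induces an isomorphism
`A⁺ε_t ⊗_{S_t} ε_tA⁻ ≅ Aε_tA`; since `S_t = ∏_{deg eᵢ = t} k eᵢ`, this tensor product
decomposes as `⊕_{deg eᵢ = t} A⁺eᵢ ⊗ₖ eᵢA⁻`, and the multiplication map from the latter
to `Aε_tA` is bijective (hence an isomorphism of `A⁺`–`A⁻`-bimodules). -/
theorem reedy_bottom_heredity_decomposition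
    (k : Type*) [Field k] (A : Type*) [Ring A] [Algebra k A] [FiniteDimensional k A]
    {ι : Type*} [Fintype ι] [DecidableEq ι]
    (e : ι → A) (deg : ι → ℕ) (Ap Am : Subalgebra k A)
    (h : IsReedy k e deg Ap Am)
    (t : ℕ) (ht_le : ∀ i, t ≤ deg i) (ht_ex : ∃ i, deg i = t) :
    Function.Injective (DirectSum.toModule k {i : ι // deg i = t} A fun l =>
      mulTensor k (cornerSpace k 1 (e l.1) (Ap : Set A))
        (cornerSpace k (e l.1) 1 (Am : Set A))) ∧
    LinearMap.range (DirectSum.toModule k {i : ι // deg i = t} A fun l =>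
      mulTensor k (cornerSpace k 1 (e l.1) (Ap : Set A))
        (cornerSpace k (e l.1) 1 (Am : Set A)))
      = Submodule.span k
          {x | ∃ a b : A, x = a * (∑ i : {i : ι // deg i = t}, e i.1) * b} := by
  classical
  open ReedyAux in
  set T := {i : ι // deg i = t} with hTdef
  set F : (⨁ l : T, (↥(cornerSpace k 1 (e l.1) (Ap : Set A)) ⊗[k]
      ↥(cornerSpace k (e l.1) 1 (Am : Set A)))) →ₗ[k] A :=
    DirectSum.toModule k T A fun l =>
      mulTensor k (cornerSpace k 1 (e l.1) (Ap : Set A))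
        (cornerSpace k (e l.1) 1 (Am : Set A)) with hFdef
  constructor
  · -- injectivity
    suffices hz : ∀ x, F x = 0 → x = 0 by
      intro x y hxy
      letI : ∀ l : T, AddCommGroup (↥(cornerSpace k 1 (e l.1) (Ap : Set A)) ⊗[k]
          ↥(cornerSpace k (e l.1) 1 (Am : Set A))) := fun _ => TensorProduct.addCommGroup
      have h0 : F (x - y) = 0 := by rw [map_sub, hxy, sub_self]
      exact sub_eq_zero.mp (hz _ h0)
    intro x hx
    -- the comparison maps G j i
    set G : ∀ j i : ι, (⨁ l : T, (↥(cornerSpace k 1 (e l.1) (Ap : Set A)) ⊗[k]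
        ↥(cornerSpace k (e l.1) 1 (Am : Set A)))) →ₗ[k]
        (⨁ m : ι, (↥(cornerSpace k (e j) (e m) (Ap : Set A)) ⊗[k]
          ↥(cornerSpace k (e m) (e i) (Am : Set A)))) :=
      fun j i => DirectSum.toModule k T _ fun l =>
        (DirectSum.lof k ι (fun m => (↥(cornerSpace k (e j) (e m) (Ap : Set A)) ⊗[k]
          ↥(cornerSpace k (e m) (e i) (Am : Set A)))) l.1).comp
          (TensorProduct.map (ReedyAux.piP k (e j) (e l.1) (Ap : Set A))
            (ReedyAux.piM k (e l.1) (e i) (Am : Set A))) with hGdef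
    have hGF : ∀ j i y, reedyMulMap k e (Ap : Set A) (Am : Set A) j i (G j i y)
        = e j * (F y * e i) := by
      intro j i y
      refine DirectSum.induction_on y (by simp) ?_ ?_
      · intro l v
        rw [← DirectSum.lof_eq_of k, hGdef, hFdef, DirectSum.toModule_lof,
          DirectSum.toModule_lof]
        refine TensorProduct.induction_on v (by simp) ?_ ?_
        · intro p q
          rw [LinearMap.comp_apply, TensorProduct.map_tmul, reedyMulMap,
            DirectSum.toModule_lof, ReedyAux.mulTensor_tmul, ReedyAux.mulTensor_tmul,
            ReedyAux.piP_coe, ReedyAux.piM_coe]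
          simp only [mul_assoc]
        · intro a b ha hb
          simp only [map_add, mul_add, add_mul] at ha hb ⊢
          rw [ha, hb]
      · intro a b ha hb
        simp only [map_add, mul_add, add_mul] at ha hb ⊢
        rw [ha, hb]
    have hGx : ∀ j i : ι, G j i x = 0 := by
      intro j i
      refine h.mul_inj i j ?_
      rw [map_zero, hGF j i x, hx, zero_mul, mul_zero]
    have hcomp : ∀ (j i : ι) (l : T) (y), (G j i y) l.1
        = TensorProduct.map (ReedyAux.piP k (e j) (e l.1) (Ap : Set A))
            (ReedyAux.piM k (e l.1) (e i) (Am : Set A)) (y l) := by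
      intro j i l y
      refine DirectSum.induction_on y (by simp) ?_ ?_
      · intro l' v
        rw [← DirectSum.lof_eq_of k, hGdef, DirectSum.toModule_lof, LinearMap.comp_apply]
        by_cases hl : l' = l
        · subst hl
          rw [DirectSum.lof_eq_of, DirectSum.lof_eq_of, DirectSum.of_apply,
            DirectSum.of_apply, dif_pos rfl, dif_pos rfl]
        · rw [DirectSum.lof_eq_of, DirectSum.lof_eq_of,
            DirectSum.of_eq_of_ne _ _ _ (fun hh => hl (Subtype.ext hh.symm)),
            DirectSum.of_eq_of_ne _ _ _ (Ne.symm hl), map_zero]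
      · intro a b ha hb
        rw [map_add, DirectSum.add_apply, DirectSum.add_apply, map_add, ha, hb]
    have hml : ∀ (l : T) (j i : ι),
        TensorProduct.map (ReedyAux.piP k (e j) (e l.1) (Ap : Set A))
          (ReedyAux.piM k (e l.1) (e i) (Am : Set A)) (x l) = 0 := by
      intro l j i
      rw [← hcomp j i l x, hGx j i, DirectSum.zero_apply]
    refine DFinsupp.ext fun l => ?_
    -- reconstruct x l from its projections
    have hPid : (∑ j, (Submodule.inclusion (ReedyAux.reedy_cornerP_le h j l.1)).comp
        (ReedyAux.piP k (e j) (e l.1) (Ap : Set A))) = LinearMap.id := by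
      refine LinearMap.ext fun p => Subtype.ext ?_
      rw [LinearMap.sum_apply]
      have : ((∑ j, ((Submodule.inclusion (ReedyAux.reedy_cornerP_le h j l.1)).comp
          (ReedyAux.piP k (e j) (e l.1) (Ap : Set A))) p : _) : A)
          = ∑ j, e j * (p : A) := by
        rw [AddSubmonoidClass.coe_finset_sum]
        exact Finset.sum_congr rfl fun j _ => by
          rw [LinearMap.comp_apply, Submodule.coe_inclusion, ReedyAux.piP_coe]
      rw [this, ← Finset.sum_mul, h.complete, one_mul, LinearMap.id_apply]
    have hMid : (∑ i, (Submodule.inclusion (ReedyAux.reedy_cornerM_le h l.1 i)).comp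
        (ReedyAux.piM k (e l.1) (e i) (Am : Set A))) = LinearMap.id := by
      refine LinearMap.ext fun p => Subtype.ext ?_
      rw [LinearMap.sum_apply]
      have : ((∑ i, ((Submodule.inclusion (ReedyAux.reedy_cornerM_le h l.1 i)).comp
          (ReedyAux.piM k (e l.1) (e i) (Am : Set A))) p : _) : A)
          = ∑ i, (p : A) * e i := by
        rw [AddSubmonoidClass.coe_finset_sum]
        exact Finset.sum_congr rfl fun i _ => by
          rw [LinearMap.comp_apply, Submodule.coe_inclusion, ReedyAux.piM_coe]
      rw [this, ← Finset.mul_sum, h.complete, mul_one, LinearMap.id_apply]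
    have hxl : x l = TensorProduct.map
        (∑ j, (Submodule.inclusion (ReedyAux.reedy_cornerP_le h j l.1)).comp
          (ReedyAux.piP k (e j) (e l.1) (Ap : Set A)))
        (∑ i, (Submodule.inclusion (ReedyAux.reedy_cornerM_le h l.1 i)).comp
          (ReedyAux.piM k (e l.1) (e i) (Am : Set A))) (x l) := by
      rw [hPid, hMid, TensorProduct.map_id, LinearMap.id_apply]
    have hsum : TensorProduct.map
        (∑ j, (Submodule.inclusion (ReedyAux.reedy_cornerP_le h j l.1)).comp
          (ReedyAux.piP k (e j) (e l.1) (Ap : Set A)))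
        (∑ i, (Submodule.inclusion (ReedyAux.reedy_cornerM_le h l.1 i)).comp
          (ReedyAux.piM k (e l.1) (e i) (Am : Set A)))
        = ∑ j, ∑ i, TensorProduct.map
          ((Submodule.inclusion (ReedyAux.reedy_cornerP_le h j l.1)).comp
            (ReedyAux.piP k (e j) (e l.1) (Ap : Set A)))
          ((Submodule.inclusion (ReedyAux.reedy_cornerM_le h l.1 i)).comp
            (ReedyAux.piM k (e l.1) (e i) (Am : Set A))) := by
      simp only [← TensorProduct.mapBilinear_apply, map_sum, LinearMap.sum_apply]
      rw [Finset.sum_comm]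
    show x l = 0
    rw [hxl, hsum, LinearMap.sum_apply]
    refine Finset.sum_eq_zero fun j _ => ?_
    rw [LinearMap.sum_apply]
    refine Finset.sum_eq_zero fun i _ => ?_
    rw [TensorProduct.map_comp, LinearMap.comp_apply, hml l j i, map_zero]
  · -- range
    set ε := ∑ i : T, e i.1 with hε
    have hεe : ∀ l : T, ε * e l.1 = e l.1 := by
      intro l
      rw [hε, Finset.sum_mul, Finset.sum_eq_single l]
      · exact h.idem l.1
      · intro i _ hi
        exact h.orth i.1 l.1 (fun hh => hi (Subtype.ext hh))
      · intro hl; exact absurd (Finset.mem_univ l) hl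
    apply le_antisymm
    · rintro x ⟨y, rfl⟩
      refine ReedyAux.toModule_mem_of k _ _ ?_ y
      intro l v
      refine ReedyAux.mulTensor_mem k _ _ _ ?_ v
      intro p q
      have hq1 : e l.1 * (q : A) = (q : A) :=
        ReedyAux.cornerSpace_mul_left k (h.idem l.1) q.1 q.2
      have hεq : ε * (q : A) = (q : A) := by
        conv_lhs => rw [← hq1, ← mul_assoc, hεe l]
        exact hq1
      refine Submodule.subset_span ⟨(p : A), (q : A), ?_⟩
      rw [mul_assoc, hεq]
    · rw [Submodule.span_le]
      rintro x ⟨a, b, rfl⟩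
      have hsplit : a * ε * b = ∑ l : T, a * e l.1 * b := by
        rw [hε, Finset.mul_sum, Finset.sum_mul]
      rw [SetLike.mem_coe, hsplit]
      refine Submodule.sum_mem _ fun l _ => ?_
      refine ⟨DirectSum.lof k T _ l
        ((⟨a * e l.1, ReedyAux.reedy_mem_P h ht_le l.2 a⟩ :
            cornerSpace k 1 (e l.1) (Ap : Set A)) ⊗ₜ[k]
          (⟨e l.1 * b, ReedyAux.reedy_mem_M h ht_le l.2 b⟩ :
            cornerSpace k (e l.1) 1 (Am : Set A))), ?_⟩
      rw [hFdef, DirectSum.toModule_lof, ReedyAux.mulTensor_tmul]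
      show (a * e l.1) * (e l.1 * b) = a * e l.1 * b
      rw [← mul_assoc (a * e l.1) (e l.1) b, mul_assoc a (e l.1) (e l.1), h.idem l.1]
end
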